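/- For proportional hazards distortions g₁(p) = p^{c₁}, g₂(p) = p^{c₂} with 0 < c₂ < c₁ < 1, the function p ↦ (g₁(p) − p)/(g₂(p) − p) is increasing on (0,1), and its limit as p → 1⁻ equals (1 − c₁)/(1 − c₂). -/

import Mathlib

open Set Filter

lemma aux_hasDerivAt (c p : ℝ) (hp : p ≠ 0) :
    HasDerivAt (fun x : ℝ => x ^ c - x) (c * p ^ (c - 1) - 1) p :=
  (Real.hasDerivAt_rpow_const (Or.inl hp)).sub (hasDerivAt_id p)

lemma aux_key (c₁ c₂ : ℝ) (hc₂ : 0 < c₂) (hcc : c₂ < c₁) (hc₁ : c₁ < 1) :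
    ∀ p ∈ Ioo (0:ℝ) 1,
      0 < (c₁ - c₂) * p ^ (c₁ - 1) + (1 - c₁) * p ^ (c₁ - c₂) - (1 - c₂) := by
  set M : ℝ → ℝ := fun p => (c₁ - c₂) * p ^ (c₁ - 1) + (1 - c₁) * p ^ (c₁ - c₂) - (1 - c₂)
    with hM
  have hanti : StrictAntiOn M (Ioc (0:ℝ) 1) := by
    apply strictAntiOn_of_deriv_neg (convex_Ioc 0 1)
    · apply ContinuousOn.sub (ContinuousOn.add ?_ ?_) continuousOn_const
      · exact continuousOn_const.mul fun x hx =>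
          (Real.continuousAt_rpow_const x _ (Or.inl (ne_of_gt hx.1))).continuousWithinAt
      · exact continuousOn_const.mul fun x hx =>
          (Real.continuousAt_rpow_const x _ (Or.inl (ne_of_gt hx.1))).continuousWithinAt
    · intro p hp
      rw [interior_Ioc] at hp
      obtain ⟨hp0, hp1⟩ := hp
      have hd : HasDerivAt M
          ((c₁ - c₂) * ((c₁ - 1) * p ^ (c₁ - 1 - 1)) +
            (1 - c₁) * ((c₁ - c₂) * p ^ (c₁ - c₂ - 1))) p := by
        exact (((Real.hasDerivAt_rpow_const (Or.inl hp0.ne')).const_mul (c₁ - c₂)).add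
          ((Real.hasDerivAt_rpow_const (Or.inl hp0.ne')).const_mul (1 - c₁))).sub_const _
      rw [hd.deriv]
      have hlt : p ^ (c₁ - c₂ - 1) < p ^ (c₁ - 1 - 1) :=
        Real.rpow_lt_rpow_of_exponent_gt hp0 hp1 (by linarith)
      have h1 : 0 < p ^ (c₁ - c₂ - 1) := Real.rpow_pos_of_pos hp0 _
      nlinarith [mul_pos (mul_pos (sub_pos.mpr hcc) (sub_pos.mpr hc₁)) (sub_pos.mpr hlt)]
  intro p hp
  have hM1 : M 1 = 0 := by simp [hM, Real.one_rpow]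
  have := hanti ⟨hp.1, hp.2.le⟩ ⟨one_pos, le_refl 1⟩ hp.2
  rw [hM1] at this
  exact this

theorem stmt_13 (c₁ c₂ : ℝ) (hc₂ : 0 < c₂) (hcc : c₂ < c₁) (hc₁ : c₁ < 1) :
    StrictMonoOn (fun p : ℝ => (p ^ c₁ - p) / (p ^ c₂ - p)) (Ioo (0:ℝ) 1) ∧
      Tendsto (fun p : ℝ => (p ^ c₁ - p) / (p ^ c₂ - p)) (nhdsWithin 1 (Iio (1:ℝ)))
        (nhds ((1 - c₁) / (1 - c₂))) := by
  have hc₂1 : c₂ < 1 := hcc.trans hc₁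
  have hden : ∀ p ∈ Ioo (0:ℝ) 1, 0 < p ^ c₂ - p := by
    intro p hp
    have := Real.rpow_lt_rpow_of_exponent_gt hp.1 hp.2 hc₂1
    rw [Real.rpow_one] at this
    linarith
  constructor
  · apply strictMonoOn_of_deriv_pos (convex_Ioo 0 1)
    · apply ContinuousOn.div
      · exact ContinuousOn.sub (fun x hx =>
          (Real.continuousAt_rpow_const x _ (Or.inl (ne_of_gt hx.1))).continuousWithinAt)
          continuousOn_id
      · exact ContinuousOn.sub (fun x hx =>
          (Real.continuousAt_rpow_const x _ (Or.inl (ne_of_gt hx.1))).continuousWithinAt)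
          continuousOn_id
      · intro x hx; exact (hden x hx).ne'
    · intro p hp
      rw [interior_Ioo] at hp
      obtain ⟨hp0, hp1⟩ := hp
      have hdp := hden p ⟨hp0, hp1⟩
      have hd : HasDerivAt (fun p : ℝ => (p ^ c₁ - p) / (p ^ c₂ - p))
          (((c₁ * p ^ (c₁ - 1) - 1) * (p ^ c₂ - p) -
            (p ^ c₁ - p) * (c₂ * p ^ (c₂ - 1) - 1)) / (p ^ c₂ - p) ^ 2) p :=
        (aux_hasDerivAt c₁ p hp0.ne').div (aux_hasDerivAt c₂ p hp0.ne') hdp.ne'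
      rw [hd.deriv]
      apply div_pos _ (by positivity)
      have e1 : p ^ (c₁ - 1) = p ^ c₁ / p := by
        rw [Real.rpow_sub hp0, Real.rpow_one]
      have e2 : p ^ (c₂ - 1) = p ^ c₂ / p := by
        rw [Real.rpow_sub hp0, Real.rpow_one]
      have e3 : p ^ (c₁ - c₂) = p ^ c₁ / p ^ c₂ := by
        rw [Real.rpow_sub hp0]
      have hkey := aux_key c₁ c₂ hc₂ hcc hc₁ p ⟨hp0, hp1⟩
      rw [e1, e3] at hkey
      have hpc₂ : 0 < p ^ c₂ := Real.rpow_pos_of_pos hp0 _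
      have : 0 < p ^ c₂ * ((c₁ - c₂) * (p ^ c₁ / p) + (1 - c₁) * (p ^ c₁ / p ^ c₂) - (1 - c₂)) :=
        mul_pos hpc₂ hkey
      rw [e1, e2]
      field_simp at this ⊢
      nlinarith [this]
  · have hff' : ∀ᶠ p in nhdsWithin (1:ℝ) (Iio 1),
        HasDerivAt (fun x : ℝ => x ^ c₁ - x) (c₁ * p ^ (c₁ - 1) - 1) p := by
      filter_upwards [Ioo_mem_nhdsLT_of_mem (show (1:ℝ) ∈ Ioc (0:ℝ) 1 by norm_num)]
        with p hp
      exact aux_hasDerivAt c₁ p hp.1.ne'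
    have hgg' : ∀ᶠ p in nhdsWithin (1:ℝ) (Iio 1),
        HasDerivAt (fun x : ℝ => x ^ c₂ - x) (c₂ * p ^ (c₂ - 1) - 1) p := by
      filter_upwards [Ioo_mem_nhdsLT_of_mem (show (1:ℝ) ∈ Ioc (0:ℝ) 1 by norm_num)]
        with p hp
      exact aux_hasDerivAt c₂ p hp.1.ne'
    have htg : Tendsto (fun p : ℝ => c₂ * p ^ (c₂ - 1) - 1) (nhdsWithin 1 (Iio 1))
        (nhds (c₂ - 1)) := by
      have : ContinuousAt (fun p : ℝ => c₂ * p ^ (c₂ - 1) - 1) 1 :=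
        ((Real.continuousAt_rpow_const 1 _ (Or.inl one_ne_zero)).const_mul c₂).sub
          continuousAt_const
      simpa [Real.one_rpow] using this.tendsto.mono_left nhdsWithin_le_nhds
    have htf : Tendsto (fun p : ℝ => c₁ * p ^ (c₁ - 1) - 1) (nhdsWithin 1 (Iio 1))
        (nhds (c₁ - 1)) := by
      have : ContinuousAt (fun p : ℝ => c₁ * p ^ (c₁ - 1) - 1) 1 :=
        ((Real.continuousAt_rpow_const 1 _ (Or.inl one_ne_zero)).const_mul c₁).sub
          continuousAt_const
      simpa [Real.one_rpow] using this.tendsto.mono_left nhdsWithin_le_nhds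
    have hg' : ∀ᶠ p in nhdsWithin (1:ℝ) (Iio 1), c₂ * p ^ (c₂ - 1) - 1 ≠ 0 :=
      htg.eventually_ne (by linarith)
    have hfa : Tendsto (fun p : ℝ => p ^ c₁ - p) (nhdsWithin 1 (Iio 1)) (nhds 0) := by
      have : ContinuousAt (fun p : ℝ => p ^ c₁ - p) 1 :=
        (Real.continuousAt_rpow_const 1 _ (Or.inl one_ne_zero)).sub continuousAt_id
      simpa [Real.one_rpow] using this.tendsto.mono_left nhdsWithin_le_nhds
    have hga : Tendsto (fun p : ℝ => p ^ c₂ - p) (nhdsWithin 1 (Iio 1)) (nhds 0) := by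
      have : ContinuousAt (fun p : ℝ => p ^ c₂ - p) 1 :=
        (Real.continuousAt_rpow_const 1 _ (Or.inl one_ne_zero)).sub continuousAt_id
      simpa [Real.one_rpow] using this.tendsto.mono_left nhdsWithin_le_nhds
    have hdiv : Tendsto (fun p : ℝ => (c₁ * p ^ (c₁ - 1) - 1) / (c₂ * p ^ (c₂ - 1) - 1))
        (nhdsWithin 1 (Iio 1)) (nhds ((1 - c₁) / (1 - c₂))) := by
      have heq : (1 - c₁) / (1 - c₂) = (c₁ - 1) / (c₂ - 1) := by
        rw [div_eq_div_iff (by linarith) (by linarith)]; ring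
      rw [heq]
      exact htf.div htg (by linarith)
    exact HasDerivAt.lhopital_zero_nhdsLT hff' hgg' hg' hfa hga hdiv
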